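/- Let σ1 = (u_1, …, u_m) and σ2 = (w_1, …, w_p) be routes and let δ = d(u_m, w_1) be the travel time from the last vertex of σ1 to the first vertex of σ2. Then the concatenated route is time-window feasible if and only if both parts are time-window feasible and the earliest completion of the first part allows a feasible start of the second part; formally, F(σ1 ⊕ σ2) ↔ F(σ1) ∧ F(σ2) ∧ (E(σ1) + δ ≤ L(σ2)). -/

import Mathlib

/-- Begin-of-service time at the last vertex of the route `(v :: rest)` when service at `v`
begins at time `s`: `t₁ = s`, `t_{k+1} = max (t_k + d v_k v_{k+1}) (e v_{k+1})`. -/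
def lastTime {V : Type*} (d : V → V → ℝ) (e : V → ℝ) : ℝ → V → List V → ℝ
  | s, _, [] => s
  | s, v, w :: rest => lastTime d e (max (s + d v w) (e w)) w rest

/-- Total travel time `T(σ)` along the route `(v :: rest)`. -/
def travel {V : Type*} (d : V → V → ℝ) : V → List V → ℝ
  | _, [] => 0
  | v, w :: rest => d v w + travel d w rest

/-- Latest feasible start time `L(σ) = min_{1 ≤ k ≤ n} (l(v_k) - T_k(σ))` of route `(v :: rest)`. -/
def latest {V : Type*} (d : V → V → ℝ) (l : V → ℝ) : V → List V → ℝ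
  | v, [] => l v
  | v, w :: rest => min (l v) (latest d l w rest - d v w)

/-- The schedule along route `(v :: rest)` starting at time `s` satisfies all deadline
constraints `t_k ≤ l(v_k)`. -/
def feasFrom {V : Type*} (d : V → V → ℝ) (e l : V → ℝ) : ℝ → V → List V → Prop
  | s, v, [] => s ≤ l v
  | s, v, w :: rest => s ≤ l v ∧ feasFrom d e l (max (s + d v w) (e w)) w rest

/-- `E(σ)`: begin-of-service time at the last vertex of the earliest schedule
(start time `s = e v₁`). -/
def earliestEnd {V : Type*} (d : V → V → ℝ) (e : V → ℝ) (v : V) (rest : List V) : ℝ :=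
  lastTime d e (e v) v rest

/-- `F(σ)`: the route `(v :: rest)` is time-window feasible, i.e. the earliest schedule
(start time `s = e v₁`) satisfies all deadline constraints. -/
def twFeasible {V : Type*} (d : V → V → ℝ) (e l : V → ℝ) (v : V) (rest : List V) : Prop :=
  feasFrom d e l (e v) v rest

/-- `F(σ₁ ⊕ σ₂) ↔ F σ₁ ∧ F σ₂ ∧ E σ₁ + δ ≤ L σ₂` where `δ` is the travel time from the last
vertex of `σ₁ = (u :: us)` to the first vertex of `σ₂ = (w :: ws)`. -/

lemma feasFrom_anti {V : Type*} (d : V → V → ℝ) (e l : V → ℝ) :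
    ∀ (rest : List V) (v : V) (s s' : ℝ), s' ≤ s →
      feasFrom d e l s v rest → feasFrom d e l s' v rest
  | [], v, s, s', h, hf => le_trans h hf
  | w :: rest, v, s, s', h, hf =>
    ⟨le_trans h hf.1,
      feasFrom_anti d e l rest w _ _
        (max_le_max (add_le_add h le_rfl) le_rfl) hf.2⟩

lemma feasFrom_iff_le_latest {V : Type*} (d : V → V → ℝ) (e l : V → ℝ) :
    ∀ (rest : List V) (w : V), feasFrom d e l (e w) w rest →
      ∀ s : ℝ, (feasFrom d e l s w rest ↔ s ≤ latest d l w rest)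
  | [], w, _, s => by simp [feasFrom, latest]
  | w' :: rest, w, h, s => by
    have h2 : feasFrom d e l (e w') w' rest :=
      feasFrom_anti d e l rest w' _ _ (le_max_right _ _) h.2
    have IH := feasFrom_iff_le_latest d e l rest w' h2
    have hew' : e w' ≤ latest d l w' rest := (IH (e w')).1 h2
    simp only [feasFrom, latest]
    constructor
    · rintro ⟨h1, h3⟩
      have hm := (IH _).1 h3
      have := le_trans (le_max_left _ _) hm
      exact le_min h1 (by linarith)
    · intro hs
      have hs1 := le_trans hs (min_le_left _ _)
      have hs2 := le_trans hs (min_le_right _ _)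
      exact ⟨hs1, (IH _).2 (max_le (by linarith) hew')⟩

lemma feasFrom_append {V : Type*} (d : V → V → ℝ) (e l : V → ℝ) (w : V) (ws : List V) :
    ∀ (us : List V) (u : V) (s : ℝ),
      feasFrom d e l s u (us ++ w :: ws) ↔
        feasFrom d e l s u us ∧
          feasFrom d e l
            (max (lastTime d e s u us + d ((u :: us).getLast (List.cons_ne_nil u us)) w) (e w))
            w ws
  | [], u, s => by simp [feasFrom, lastTime]
  | u' :: us, u, s => by
    simp only [List.cons_append, feasFrom, lastTime, List.append_eq]
    rw [feasFrom_append d e l w ws us u' (max (s + d u u') (e u'))]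
    have : (u :: u' :: us).getLast (List.cons_ne_nil _ _) =
        (u' :: us).getLast (List.cons_ne_nil _ _) := rfl
    rw [this, and_assoc]

theorem twFeasible_append {V : Type*} (d : V → V → ℝ) (e l : V → ℝ)
    (hd : ∀ u v, 0 ≤ d u v) (hel : ∀ v, e v ≤ l v)
    (u : V) (us : List V) (w : V) (ws : List V) :
    twFeasible d e l u (us ++ w :: ws) ↔
      twFeasible d e l u us ∧ twFeasible d e l w ws ∧
        earliestEnd d e u us + d ((u :: us).getLast (List.cons_ne_nil u us)) w ≤
          latest d l w ws := by
  unfold twFeasible earliestEnd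
  rw [feasFrom_append d e l w ws us u (e u), and_congr_right_iff]
  intro _
  set t := lastTime d e (e u) u us + d ((u :: us).getLast (List.cons_ne_nil u us)) w with ht
  constructor
  · intro hf
    have hfw : feasFrom d e l (e w) w ws :=
      feasFrom_anti d e l ws w _ _ (le_max_right _ _) hf
    have := (feasFrom_iff_le_latest d e l ws w hfw _).1 hf
    exact ⟨hfw, le_trans (le_max_left _ _) this⟩
  · rintro ⟨hfw, hle⟩
    have hew := (feasFrom_iff_le_latest d e l ws w hfw (e w)).1 hfw
    exact (feasFrom_iff_le_latest d e l ws w hfw _).2 (max_le hle hew)
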